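/- Let n ≥ 1, let a₁, …, a_n be positive reals and let E > 0. Define ε*ᵢ = E · sqrt(aᵢ) / (∑_{j=1}^n sqrt(aⱼ)) for i = 1, …, n. Then each ε*ᵢ > 0, ∑_{i=1}^n ε*ᵢ = E, the objective value satisfies ∑_{i=1}^n aᵢ/ε*ᵢ = (∑_{i=1}^n sqrt(aᵢ))² / E, and for every positive ε₁, …, ε_n with ∑_{i=1}^n εᵢ = E one has ∑_{i=1}^n aᵢ/ε*ᵢ ≤ ∑_{i=1}^n aᵢ/εᵢ; i.e., ε* minimizes ∑ aᵢ/εᵢ over the feasible set. -/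
import Mathlib


/-- Closed-form optimal privacy-budget allocation (Equation (sol) of the paper):
for positive weights `aᵢ` and total budget `E > 0`, the allocation
`ε*ᵢ = E·sqrt(aᵢ)/∑ⱼ sqrt(aⱼ)` is positive, sums to `E`, achieves objective value
`(∑ sqrt(aᵢ))²/E`, and minimizes `∑ aᵢ/εᵢ` over all positive allocations summing
to `E`. -/
theorem budget_allocation_optimal (n : ℕ) (hn : 1 ≤ n)
    (a : Fin n → ℝ) (ha : ∀ i, 0 < a i)
    (E : ℝ) (hE : 0 < E) :
    (∀ i, 0 < E * Real.sqrt (a i) / ∑ j, Real.sqrt (a j)) ∧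
    (∑ i, E * Real.sqrt (a i) / ∑ j, Real.sqrt (a j)) = E ∧
    (∑ i, a i / (E * Real.sqrt (a i) / ∑ j, Real.sqrt (a j))) =
      (∑ i, Real.sqrt (a i)) ^ 2 / E ∧
    (∀ ε : Fin n → ℝ, (∀ i, 0 < ε i) → (∑ i, ε i) = E →
      (∑ i, a i / (E * Real.sqrt (a i) / ∑ j, Real.sqrt (a j))) ≤ ∑ i, a i / ε i) := by
  have hsq : ∀ i, 0 < Real.sqrt (a i) := fun i => Real.sqrt_pos.2 (ha i)
  have hS : 0 < ∑ j, Real.sqrt (a j) :=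
    Finset.sum_pos (fun i _ => hsq i) (Finset.univ_nonempty_iff.2 ⟨⟨0, hn⟩⟩)
  have hpos : ∀ i, 0 < E * Real.sqrt (a i) / ∑ j, Real.sqrt (a j) := fun i =>
    div_pos (mul_pos hE (hsq i)) hS
  have hsum : (∑ i, E * Real.sqrt (a i) / ∑ j, Real.sqrt (a j)) = E := by
    rw [← Finset.sum_div, ← Finset.mul_sum, mul_div_assoc, div_self hS.ne', mul_one]
  have hobj : (∑ i, a i / (E * Real.sqrt (a i) / ∑ j, Real.sqrt (a j))) =
      (∑ i, Real.sqrt (a i)) ^ 2 / E := by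
    have : ∀ i : Fin n, a i / (E * Real.sqrt (a i) / ∑ j, Real.sqrt (a j)) =
        Real.sqrt (a i) * (∑ j, Real.sqrt (a j)) / E := by
      intro i
      rw [div_div_eq_mul_div, div_eq_div_iff (mul_pos hE (hsq i)).ne' hE.ne']
      nth_rewrite 1 [← Real.mul_self_sqrt (ha i).le]
      ring
    rw [Finset.sum_congr rfl fun i _ => this i, ← Finset.sum_div, ← Finset.sum_mul, sq]
  refine ⟨hpos, hsum, hobj, fun ε hε hεs => ?_⟩
  rw [hobj, ← hεs]
  have := Finset.sq_sum_div_le_sum_sq_div Finset.univ (fun i => Real.sqrt (a i))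
    (fun i _ => hε i)
  simpa [Real.sq_sqrt (ha _).le] using this
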